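/- Let μ be the coin-tossing measure on the Cantor space 2^ℕ. Suppose A ⊆ 2^ℕ is measurable, nonempty, has empty interior, and A = Φ(A). Then Blur(A) is Σ⁰₃-complete: Blur(A) is a countable union of Gδ sets, and for every subset S of 2^ℕ that is a countable union of Gδ sets there is a continuous function g : 2^ℕ → 2^ℕ with S = g⁻¹(Blur(A)). -/

import Mathlib

open MeasureTheory Set Filter Topology

/-- The basic clopen cylinder of length `n` around `x` in the Cantor space. -/
def cylinder (x : ℕ → Bool) (n : ℕ) : Set (ℕ → Bool) :=
  {y | ∀ i < n, y i = x i}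

/-- The "local measure" ratio `2^n · μ(A ∩ [x↾n])`, whose limit (when it exists) is the
density of `A` at `x` in the Cantor space. -/
noncomputable def densSeq (μ : Measure (ℕ → Bool)) (A : Set (ℕ → Bool))
    (x : ℕ → Bool) (n : ℕ) : ℝ :=
  2 ^ n * (μ (A ∩ cylinder x n)).toReal

/-- `Φ(A)`: the set of points at which `A` has density `1`. -/
def PhiSet (μ : Measure (ℕ → Bool)) (A : Set (ℕ → Bool)) : Set (ℕ → Bool) :=
  {x | Tendsto (densSeq μ A x) atTop (𝓝 1)}

/-- `Blur(A)`: the set of points at which the density of `A` does not exist. -/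
def BlurSet (μ : Measure (ℕ → Bool)) (A : Set (ℕ → Bool)) : Set (ℕ → Bool) :=
  {x | liminf (densSeq μ A x) atTop < limsup (densSeq μ A x) atTop}

/-- A set is `Σ⁰₃` iff it is a countable union of `Gδ` sets. -/
def IsSigma03 {Y : Type*} [TopologicalSpace Y] (S : Set Y) : Prop :=
  ∃ G : ℕ → Set Y, (∀ n, IsGδ (G n)) ∧ S = ⋃ n, G n

open scoped ENNReal

namespace BlurAux

lemma mem_cylinder_self (x : ℕ → Bool) (n : ℕ) : x ∈ cylinder x n := fun _ _ => rfl

lemma cylinder_anti {m n : ℕ} (h : m ≤ n) (x : ℕ → Bool) : cylinder x n ⊆ cylinder x m :=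
  fun _ hy i hi => hy i (lt_of_lt_of_le hi h)

lemma cylinder_eq_of_mem {x y : ℕ → Bool} {n : ℕ} (h : y ∈ cylinder x n) :
    cylinder y n = cylinder x n := by
  ext z; constructor <;> intro hz i hi
  · exact (hz i hi).trans (h i hi)
  · exact (hz i hi).trans (h i hi).symm

lemma cylinder_eq_piNat (x : ℕ → Bool) (n : ℕ) : cylinder x n = PiNat.cylinder x n := rfl

lemma isOpen_cylinder (x : ℕ → Bool) (n : ℕ) : IsOpen (cylinder x n) :=
  (PiNat.isTopologicalBasis_cylinders (fun _ : ℕ => Bool)).isOpen ⟨x, n, rfl⟩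

lemma exists_cylinder_subset {U : Set (ℕ → Bool)} (hU : IsOpen U) {x : ℕ → Bool}
    (hx : x ∈ U) : ∃ n, cylinder x n ⊆ U := by
  obtain ⟨s, ⟨y, n, rfl⟩, hxs, hsU⟩ :=
    (PiNat.isTopologicalBasis_cylinders (fun _ : ℕ => Bool)).exists_subset_of_mem_open hx hU
  have hxs' : x ∈ cylinder y n := hxs
  exact ⟨n, by rw [cylinder_eq_of_mem hxs']; exact hsU⟩

lemma measurableSet_cylinder (x : ℕ → Bool) (n : ℕ) : MeasurableSet (cylinder x n) :=
  (isOpen_cylinder x n).measurableSet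

section

variable {μ : Measure (ℕ → Bool)} {A : Set (ℕ → Bool)}
variable (hμ : ∀ (x : ℕ → Bool) (n : ℕ), μ (cylinder x n) = 1 / 2 ^ n)

include hμ

lemma cyl_ne_top (x : ℕ → Bool) (n : ℕ) : μ (cylinder x n) ≠ ⊤ := by
  rw [hμ]
  simp [ENNReal.div_eq_top]

lemma inter_cyl_ne_top (B : Set (ℕ → Bool)) (x : ℕ → Bool) (n : ℕ) :
    μ (B ∩ cylinder x n) ≠ ⊤ :=
  fun h => cyl_ne_top hμ x n (top_le_iff.mp (h ▸ measure_mono inter_subset_right))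

lemma toReal_cyl (x : ℕ → Bool) (n : ℕ) : (μ (cylinder x n)).toReal = ((2:ℝ) ^ n)⁻¹ := by
  rw [hμ, one_div, ENNReal.toReal_inv]
  simp

lemma isProb : IsProbabilityMeasure μ := by
  constructor
  have : (univ : Set (ℕ → Bool)) = cylinder (fun _ => false) 0 := by
    ext y
    simp only [mem_univ, true_iff]
    exact fun i hi => absurd hi (Nat.not_lt_zero i)
  rw [this, hμ]; simp

omit hμ in
lemma densSeq_nonneg (x : ℕ → Bool) (n : ℕ) : 0 ≤ densSeq μ A x n := by
  unfold densSeq; positivity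

lemma densSeq_le_one (x : ℕ → Bool) (n : ℕ) : densSeq μ A x n ≤ 1 := by
  unfold densSeq
  have h1 : (μ (A ∩ cylinder x n)).toReal ≤ ((2:ℝ)^n)⁻¹ := by
    rw [← toReal_cyl hμ x n]
    exact ENNReal.toReal_mono (cyl_ne_top hμ x n) (measure_mono inter_subset_right)
  calc 2^n * (μ (A ∩ cylinder x n)).toReal ≤ 2^n * ((2:ℝ)^n)⁻¹ := by
        exact mul_le_mul_of_nonneg_left h1 (by positivity)
    _ = 1 := by field_simp

end

lemma densSeq_eq_of_mem {μ : Measure (ℕ → Bool)} {A : Set (ℕ → Bool)} {x y : ℕ → Bool}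
    {n : ℕ} (h : y ∈ cylinder x n) : densSeq μ A y n = densSeq μ A x n := by
  unfold densSeq; rw [cylinder_eq_of_mem h]

lemma densSeq_doubling {μ : Measure (ℕ → Bool)} {A : Set (ℕ → Bool)}
    (hμ : ∀ (x : ℕ → Bool) (n : ℕ), μ (cylinder x n) = 1 / 2 ^ n)
    (x : ℕ → Bool) (n : ℕ) :
    2 * densSeq μ A x n - 1 ≤ densSeq μ A x (n + 1) := by
  set x' : ℕ → Bool := Function.update x n (!x n) with hx'
  have hsub : A ∩ cylinder x n ⊆ (A ∩ cylinder x (n+1)) ∪ cylinder x' (n+1) := by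
    rintro z ⟨hzA, hzc⟩
    by_cases hz : z n = x n
    · left
      refine ⟨hzA, fun i hi => ?_⟩
      rcases Nat.lt_succ_iff_lt_or_eq.mp hi with h | h
      · exact hzc i h
      · subst h; exact hz
    · right
      intro i hi
      rcases Nat.lt_succ_iff_lt_or_eq.mp hi with h | h
      · rw [hx', Function.update_of_ne h.ne]
        exact hzc i h
      · subst h
        rw [hx', Function.update_self]
        cases hxn : x i <;> cases hzn : z i <;> simp_all
  have hm : μ (A ∩ cylinder x n) ≤ μ (A ∩ cylinder x (n+1)) + μ (cylinder x' (n+1)) :=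
    le_trans (measure_mono hsub) (measure_union_le _ _)
  have ht : (μ (A ∩ cylinder x n)).toReal ≤
      (μ (A ∩ cylinder x (n+1))).toReal + ((2:ℝ)^(n+1))⁻¹ := by
    rw [← toReal_cyl hμ x' (n+1), ← ENNReal.toReal_add (inter_cyl_ne_top hμ A x (n+1)) (cyl_ne_top hμ x' (n+1))]
    exact ENNReal.toReal_mono (by
      exact ENNReal.add_ne_top.mpr ⟨inter_cyl_ne_top hμ A x (n+1), cyl_ne_top hμ x' (n+1)⟩) hm
  unfold densSeq
  have h2 : (2:ℝ) * (2 ^ n * (μ (A ∩ cylinder x n)).toReal)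
      ≤ 2^(n+1) * ((μ (A ∩ cylinder x (n+1))).toReal + ((2:ℝ)^(n+1))⁻¹) := by
    rw [pow_succ]
    calc (2:ℝ) * (2 ^ n * (μ (A ∩ cylinder x n)).toReal)
        = 2^n * 2 * (μ (A ∩ cylinder x n)).toReal := by ring
      _ ≤ 2^n * 2 * ((μ (A ∩ cylinder x (n+1))).toReal + ((2:ℝ)^(n+1))⁻¹) := by
          exact mul_le_mul_of_nonneg_left ht (by positivity)
  have h3 : (2:ℝ)^(n+1) * ((2:ℝ)^(n+1))⁻¹ = 1 := by field_simp
  nlinarith [h2, h3]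

lemma isOpen_W (P : (ℕ → Bool) → ℕ → Prop)
    (hP : ∀ y m z, P y m → z ∈ cylinder y m → P z m) (n₀ : ℕ) :
    IsOpen {y | ∃ m, n₀ ≤ m ∧ P y m} := by
  rw [isOpen_iff_forall_mem_open]
  rintro y ⟨m, hm, hPy⟩
  exact ⟨cylinder y m, fun z hz => ⟨m, hm, hP y m z hPy hz⟩, isOpen_cylinder y m,
    mem_cylinder_self y m⟩

lemma cover (μ : Measure (ℕ → Bool)) (P : (ℕ → Bool) → ℕ → Prop)
    (hP : ∀ y m z, P y m → z ∈ cylinder y m → P z m) (n₀ : ℕ)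
    (B : Set (ℕ → Bool)) (c : ℝ≥0∞)
    (hB : ∀ y m, n₀ ≤ m → P y m → μ (B ∩ cylinder y m) ≤ c * μ (cylinder y m)) :
    μ (B ∩ {y | ∃ m, n₀ ≤ m ∧ P y m}) ≤ c * μ {y | ∃ m, n₀ ≤ m ∧ P y m} := by
  classical
  set W := {y | ∃ m, n₀ ≤ m ∧ P y m} with hW
  set m : (ℕ → Bool) → ℕ := fun y =>
    if hy : ∃ k, n₀ ≤ k ∧ P y k then Nat.find hy else 0 with hmdef
  have hmspec : ∀ y ∈ W, (n₀ ≤ m y ∧ P y (m y)) ∧ ∀ j < m y, ¬(n₀ ≤ j ∧ P y j) := by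
    intro y hy
    have e : m y = Nat.find hy := dif_pos hy
    rw [e]
    exact ⟨Nat.find_spec hy, fun j hj => Nat.find_min hy hj⟩
  set C : (ℕ → Bool) → Set (ℕ → Bool) := fun y => cylinder y (m y) with hC
  have hCW : ∀ y ∈ W, C y ⊆ W := by
    intro y hy z hz
    exact ⟨m y, (hmspec y hy).1.1, hP y (m y) z (hmspec y hy).1.2 hz⟩
  -- key: overlapping minimal cylinders coincide
  have key : ∀ y ∈ W, ∀ z ∈ W, ∀ w, w ∈ C y → w ∈ C z → C y = C z := by
    have half : ∀ y ∈ W, ∀ z ∈ W, m y ≤ m z → ∀ w, w ∈ C y → w ∈ C z → C y = C z := by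
      intro y hy z hz hle w hwy hwz
      have h1 : cylinder w (m y) = cylinder y (m y) := cylinder_eq_of_mem hwy
      have h2 : cylinder w (m z) = cylinder z (m z) := cylinder_eq_of_mem hwz
      have hzCy : z ∈ C y := by
        show z ∈ cylinder y (m y)
        rw [← h1]
        refine cylinder_anti hle w ?_
        rw [h2]
        exact mem_cylinder_self z (m z)
      have hPz : P z (m y) := hP y (m y) z (hmspec y hy).1.2 hzCy
      have : ¬ (m y < m z) := fun hlt => (hmspec z hz).2 (m y) hlt ⟨(hmspec y hy).1.1, hPz⟩
      have heq : m y = m z := le_antisymm hle (not_lt.mp this)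
      show cylinder y (m y) = cylinder z (m z)
      rw [← h1, ← h2, heq]
    intro y hy z hz w hwy hwz
    rcases le_total (m y) (m z) with h | h
    · exact half y hy z hz h w hwy hwz
    · exact (half z hz y hy h w hwz hwy).symm
  -- lengths are determined by the cylinders
  have lenEq : ∀ y ∈ W, ∀ z ∈ W, C y = C z → m y = m z := by
    have half : ∀ (y z : ℕ → Bool), m y < m z → C y ≠ C z := by
      intro y z hlt heq
      have heq' : cylinder y (m y) = cylinder z (m z) := heq
      set w : ℕ → Bool := Function.update y (m y) (!y (m y)) with hw
      have hwy : w ∈ cylinder y (m y) := by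
        intro i hi
        rw [hw, Function.update_of_ne hi.ne]
      have hyz : y ∈ cylinder z (m z) := heq' ▸ mem_cylinder_self y (m y)
      have hwz : w ∈ cylinder z (m z) := heq' ▸ hwy
      have h1 : w (m y) = z (m y) := hwz (m y) hlt
      have h2 : y (m y) = z (m y) := hyz (m y) hlt
      have : w (m y) = !y (m y) := by rw [hw, Function.update_self]
      rw [this, h2] at h1
      exact (Bool.not_ne_self _) h1
    intro y hy z hz heq
    rcases lt_trichotomy (m y) (m z) with h | h | h
    · exact absurd heq (half y z h)
    · exact h
    · exact absurd heq.symm (half z y h)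
  set code : (ℕ → Bool) → List Bool := fun y => List.ofFn (fun i : Fin (m y) => y i) with hcode
  set lp : List Bool → (ℕ → Bool) := fun s i => s.getD i false with hlp
  have hlpmem : ∀ y, lp (code y) ∈ C y := by
    intro y i hi
    rw [hlp, hcode]
    simp only
    rw [List.getD_eq_getElem _ _ (by simpa using hi)]
    simp
  set D : List Bool → Set (ℕ → Bool) := fun s => cylinder (lp s) s.length with hD
  have hlen : ∀ y, (code y).length = m y := by intro y; simp [hcode]
  have hDC : ∀ y, D (code y) = C y := by
    intro y
    rw [hD]
    simp only
    rw [hlen]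
    exact cylinder_eq_of_mem (hlpmem y)
  set T : Set (List Bool) := code '' W with hT
  have hWT : W = ⋃ s ∈ T, D s := by
    apply Subset.antisymm
    · intro y hy
      exact mem_biUnion (mem_image_of_mem code hy) ((hDC y) ▸ mem_cylinder_self y (m y))
    · rintro z hz
      rw [mem_iUnion₂] at hz
      obtain ⟨s, ⟨y, hy, rfl⟩, hzs⟩ := hz
      exact hCW y hy ((hDC y) ▸ hzs)
  have hcodeInj : ∀ y ∈ W, ∀ z ∈ W, C y = C z → code y = code z := by
    intro y hy z hz heq
    have hm : m y = m z := lenEq y hy z hz heq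
    apply List.ext_getElem (by rw [hlen, hlen, hm])
    intro i h1 h2
    have hi : i < m y := by rwa [hlen] at h1
    simp only [hcode, List.getElem_ofFn]
    have heq' : cylinder y (m y) = cylinder z (m z) := heq
    have hyz : y ∈ cylinder z (m z) := heq' ▸ mem_cylinder_self y (m y)
    exact hyz i (hm ▸ hi)
  have hdisj : T.PairwiseDisjoint D := by
    rintro s ⟨y, hy, rfl⟩ t ⟨z, hz, rfl⟩ hne
    rw [Function.onFun, disjoint_left]
    intro w hws hwt
    rw [hDC] at hws hwt
    exact hne (hcodeInj y hy z hz (key y hy z hz w hws hwt))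
  have hTc : T.Countable := T.to_countable
  have hmeasD : ∀ s ∈ T, MeasurableSet (D s) := fun s _ => measurableSet_cylinder _ _
  have hμW : μ W = ∑' s : T, μ (D s) := by
    rw [hWT]
    exact measure_biUnion hTc hdisj hmeasD
  have hBW : μ (B ∩ W) ≤ ∑' s : T, μ (B ∩ D s) := by
    have : B ∩ W = ⋃ s ∈ T, B ∩ D s := by rw [hWT, inter_iUnion₂]
    rw [this]
    exact measure_biUnion_le μ hTc _
  have hterm : ∀ s : T, μ (B ∩ D s) ≤ c * μ (D s) := by
    rintro ⟨s, y, hy, rfl⟩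
    have h1 : n₀ ≤ (code y).length := by rw [hlen]; exact (hmspec y hy).1.1
    have h2 : P (lp (code y)) ((code y).length) := by
      rw [hlen]
      exact hP y (m y) _ (hmspec y hy).1.2 (hlpmem y)
    exact hB (lp (code y)) ((code y).length) h1 h2
  calc μ (B ∩ W) ≤ ∑' s : T, μ (B ∩ D s) := hBW
    _ ≤ ∑' s : T, c * μ (D s) := ENNReal.tsum_le_tsum hterm
    _ = c * ∑' s : T, μ (D s) := ENNReal.tsum_mul_left
    _ = c * μ W := by rw [hμW]



section Existence

variable {μ : Measure (ℕ → Bool)} {A : Set (ℕ → Bool)}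
variable (hμ : ∀ (x : ℕ → Bool) (n : ℕ), μ (cylinder x n) = 1 / 2 ^ n)

include hμ

lemma cyl_eq_ofReal (x : ℕ → Bool) (n : ℕ) :
    μ (cylinder x n) = ENNReal.ofReal (((2:ℝ) ^ n)⁻¹) := by
  rw [hμ, one_div, ENNReal.ofReal_inv_of_pos (by positivity)]
  congr 1
  rw [ENNReal.ofReal_pow (by norm_num)]
  norm_num

lemma inter_cyl_eq_ofReal (x : ℕ → Bool) (n : ℕ) :
    μ (A ∩ cylinder x n) = ENNReal.ofReal (densSeq μ A x n * ((2:ℝ) ^ n)⁻¹) := by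
  have h1 : densSeq μ A x n * ((2:ℝ) ^ n)⁻¹ = (μ (A ∩ cylinder x n)).toReal := by
    unfold densSeq; field_simp
  rw [h1, ENNReal.ofReal_toReal (inter_cyl_ne_top hμ A x n)]

variable (hAmeas : MeasurableSet A) (hAint : interior A = ∅) (hAPhi : A = PhiSet μ A)

omit hμ in
lemma mem_A_tendsto (hAPhi : A = PhiSet μ A) {p : ℕ → Bool} (hp : p ∈ A) :
    Tendsto (densSeq μ A p) atTop (𝓝 1) := by
  rw [hAPhi] at hp; exact hp

include hAmeas hAint hAPhi in
lemma nullCompl (x : ℕ → Bool) (n : ℕ) (h0 : μ (cylinder x n \ A) = 0) : False := by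
  have key : ∀ y ∈ cylinder x n, ∀ m, n ≤ m → densSeq μ A y m = 1 := by
    intro y hy m hm
    have hsub : cylinder y m ⊆ cylinder x n := by
      rw [← cylinder_eq_of_mem hy]; exact cylinder_anti hm y
    have h1 : μ (cylinder y m \ A) = 0 :=
      measure_mono_null (diff_subset_diff_left hsub) h0
    have h2 : μ (cylinder y m) ≤ μ (A ∩ cylinder y m) := by
      calc μ (cylinder y m) ≤ μ (A ∩ cylinder y m) + μ (cylinder y m \ A) := by
            rw [inter_comm]
            exact le_of_eq (measure_inter_add_diff _ hAmeas).symm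
        _ = μ (A ∩ cylinder y m) := by rw [h1, add_zero]
    have h3 : μ (A ∩ cylinder y m) = μ (cylinder y m) :=
      le_antisymm (measure_mono inter_subset_right) h2
    unfold densSeq
    rw [h3, toReal_cyl hμ]
    field_simp
  have hsubA : cylinder x n ⊆ A := by
    intro y hy
    rw [hAPhi]
    exact tendsto_atTop_of_eventually_const (fun m (hm : n ≤ m) => key y hy m hm)
  have : cylinder x n ⊆ interior A :=
    (isOpen_cylinder x n).subset_interior_iff.mpr hsubA
  rw [hAint] at this
  exact this (mem_cylinder_self x n)

include hAmeas hAint hAPhi in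
lemma drop (x : ℕ → Bool) (n : ℕ) :
    ∃ y ∈ cylinder x n, ∃ m, n ≤ m ∧ densSeq μ A y m < 1/2 := by
  haveI : IsProbabilityMeasure μ := isProb hμ
  by_contra hcon
  push_neg at hcon
  set F := cylinder x n \ A with hF
  have hFmeas : MeasurableSet F := (measurableSet_cylinder x n).diff hAmeas
  have hFne : μ F ≠ ⊤ := by
    intro h
    exact cyl_ne_top hμ x n (top_le_iff.mp (h ▸ measure_mono diff_subset))
  have main : ∀ ε : ℝ≥0∞, 0 < ε → ε ≠ ⊤ → μ F ≤ μ F / 2 + ε := by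
    intro ε hε hεtop
    obtain ⟨U, hFU, hUopen, hUlt⟩ :=
      F.exists_isOpen_lt_of_lt _ (ENNReal.lt_add_right hFne (ne_of_gt hε))
    set P : (ℕ → Bool) → ℕ → Prop := fun z m => cylinder z m ⊆ U ∩ cylinder x n with hP
    have hPinv : ∀ y m z, P y m → z ∈ cylinder y m → P z m := by
      intro y m z hy hz
      rw [hP]
      simp only
      rw [cylinder_eq_of_mem hz]
      exact hy
    set W := {y | ∃ m, n ≤ m ∧ P y m} with hW
    have hFW : F ⊆ W := by
      intro z hz
      have hzU : z ∈ U ∩ cylinder x n := ⟨hFU hz, hz.1⟩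
      obtain ⟨k, hk⟩ := exists_cylinder_subset (hUopen.inter (isOpen_cylinder x n)) hzU
      exact ⟨max k n, le_max_right _ _,
        fun w hw => hk (cylinder_anti (le_max_left _ _) z hw)⟩
    have hWU : W ⊆ U := by
      rintro z ⟨m, _, hPz⟩
      exact (hPz (mem_cylinder_self z m)).1
    have hB : ∀ y m, n ≤ m → P y m → μ (F ∩ cylinder y m) ≤ 2⁻¹ * μ (cylinder y m) := by
      intro y m hm hPy
      set C := cylinder y m with hC
      have hyx : y ∈ cylinder x n := (hPy (mem_cylinder_self y m)).2
      have hds : 1/2 ≤ densSeq μ A y m := hcon y hyx m hm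
      have hFC : F ∩ C = C \ A := by
        apply Subset.antisymm
        · rintro z ⟨⟨_, hzA⟩, hzC⟩; exact ⟨hzC, hzA⟩
        · rintro z ⟨hzC, hzA⟩
          exact ⟨⟨(hPy hzC).2, hzA⟩, hzC⟩
      have hsum : μ (A ∩ C) + μ (C \ A) = μ C := by
        rw [inter_comm]; exact measure_inter_add_diff _ hAmeas
      have hhalf : 2⁻¹ * μ C ≤ μ (A ∩ C) := by
        rw [inter_cyl_eq_ofReal hμ, cyl_eq_ofReal hμ, ← ENNReal.ofReal_ofNat 2,
          ← ENNReal.ofReal_inv_of_pos (by norm_num), ← ENNReal.ofReal_mul (by norm_num)]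
        apply ENNReal.ofReal_le_ofReal
        have h2 : (0:ℝ) < ((2:ℝ)^m)⁻¹ := by positivity
        calc (2:ℝ)⁻¹ * ((2:ℝ)^m)⁻¹ ≤ densSeq μ A y m * ((2:ℝ)^m)⁻¹ := by
              apply mul_le_mul_of_nonneg_right _ (le_of_lt h2)
              rw [one_div] at hds; exact hds
          _ = densSeq μ A y m * ((2:ℝ)^m)⁻¹ := rfl
      rw [hFC]
      have hCne : μ C ≠ ⊤ := cyl_ne_top hμ y m
      have hCsplit : μ C = 2⁻¹ * μ C + 2⁻¹ * μ C := by
        rw [← two_mul, ← mul_assoc, ENNReal.mul_inv_cancel (by norm_num) (by norm_num), one_mul]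
      have hstep : μ (C \ A) + 2⁻¹ * μ C ≤ 2⁻¹ * μ C + 2⁻¹ * μ C := by
        calc μ (C \ A) + 2⁻¹ * μ C ≤ μ (C \ A) + μ (A ∩ C) := add_le_add (le_refl _) hhalf
          _ = μ C := by rw [add_comm]; exact hsum
          _ = 2⁻¹ * μ C + 2⁻¹ * μ C := hCsplit
      exact (ENNReal.add_le_add_iff_right (ENNReal.mul_ne_top (by norm_num) hCne)).mp hstep
    have hcover := cover μ P hPinv n F 2⁻¹ hB
    have hWmeas : MeasurableSet W := (isOpen_W P hPinv n).measurableSet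
    have hchain : μ F ≤ 2⁻¹ * (μ F + ε) := by
      calc μ F = μ (F ∩ W) := by rw [inter_eq_self_of_subset_left hFW]
        _ ≤ 2⁻¹ * μ W := hcover
        _ ≤ 2⁻¹ * μ U := by exact mul_le_mul_right (measure_mono hWU) _
        _ ≤ 2⁻¹ * (μ F + ε) := by exact mul_le_mul_right (le_of_lt hUlt) _
    calc μ F ≤ 2⁻¹ * (μ F + ε) := hchain
      _ = 2⁻¹ * μ F + 2⁻¹ * ε := by rw [mul_add]
      _ ≤ μ F / 2 + ε := by
          apply add_le_add
          · rw [ENNReal.div_eq_inv_mul]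
          · calc 2⁻¹ * ε ≤ 1 * ε := by
                  apply mul_le_mul_left
                  exact ENNReal.inv_le_one.mpr (by norm_num)
              _ = ε := one_mul ε
  have hle : μ F ≤ μ F / 2 := by
    apply ENNReal.le_of_forall_pos_le_add
    intro ε hε _
    exact main ε (by exact_mod_cast hε) ENNReal.coe_ne_top
  have hF0 : μ F = 0 := by
    by_contra hne
    exact absurd hle (not_le.mpr (ENNReal.half_lt_self hne hFne))
  exact nullCompl hμ hAmeas hAint hAPhi x n hF0

include hAmeas hAint hAPhi in
lemma rise (y : ℕ → Bool) (k : ℕ) (c : ℝ) (hc0 : 0 ≤ c) (hc : c < densSeq μ A y k) :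
    ∃ p, p ∈ A ∧ p ∈ cylinder y k ∧ ∀ m, k ≤ m → c ≤ densSeq μ A p m := by
  set P : (ℕ → Bool) → ℕ → Prop := fun z m =>
    cylinder z m ⊆ cylinder y k ∧ densSeq μ A z m < c with hP
  have hPinv : ∀ w m z, P w m → z ∈ cylinder w m → P z m := by
    intro w m z hw hz
    rw [hP]
    simp only
    rw [cylinder_eq_of_mem hz, densSeq_eq_of_mem hz]
    exact hw
  set W := {z | ∃ m, k ≤ m ∧ P z m} with hW
  have hWsub : W ⊆ cylinder y k := by
    rintro z ⟨m, _, hPz⟩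
    exact hPz.1 (mem_cylinder_self z m)
  have hB : ∀ z m, k ≤ m → P z m →
      μ (A ∩ cylinder z m) ≤ ENNReal.ofReal c * μ (cylinder z m) := by
    intro z m hm hPz
    rw [inter_cyl_eq_ofReal hμ, cyl_eq_ofReal hμ, ← ENNReal.ofReal_mul hc0]
    apply ENNReal.ofReal_le_ofReal
    apply mul_le_mul_of_nonneg_right (le_of_lt hPz.2) (by positivity)
  have hcover := cover μ P hPinv k A (ENNReal.ofReal c) hB
  have hAK : (A ∩ (cylinder y k \ W)).Nonempty := by
    by_contra hemp
    rw [not_nonempty_iff_eq_empty] at hemp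
    have hsub : A ∩ cylinder y k ⊆ A ∩ W := by
      rintro z ⟨hzA, hzc⟩
      have hzW : z ∈ W := by
        by_contra hzW
        have hmem : z ∈ A ∩ (cylinder y k \ W) := ⟨hzA, hzc, hzW⟩
        rw [hemp] at hmem
        exact absurd hmem (notMem_empty z)
      exact ⟨hzA, hzW⟩
    have hchain : μ (A ∩ cylinder y k) ≤ ENNReal.ofReal c * μ (cylinder y k) := by
      calc μ (A ∩ cylinder y k) ≤ μ (A ∩ W) := measure_mono hsub
        _ ≤ ENNReal.ofReal c * μ W := hcover
        _ ≤ ENNReal.ofReal c * μ (cylinder y k) := mul_le_mul_right (measure_mono hWsub) _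
    rw [inter_cyl_eq_ofReal hμ, cyl_eq_ofReal hμ, ← ENNReal.ofReal_mul hc0] at hchain
    have h2 : (0:ℝ) < ((2:ℝ)^k)⁻¹ := by positivity
    have := (ENNReal.ofReal_le_ofReal_iff (by positivity)).mp hchain
    have hlt : c * ((2:ℝ)^k)⁻¹ < densSeq μ A y k * ((2:ℝ)^k)⁻¹ :=
      mul_lt_mul_of_pos_right hc h2
    linarith
  obtain ⟨p, hpA, hpc, hpW⟩ := hAK
  refine ⟨p, hpA, hpc, fun m hm => ?_⟩
  by_contra hlt
  push_neg at hlt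
  apply hpW
  refine ⟨m, hm, ?_, hlt⟩
  calc cylinder p m ⊆ cylinder p k := cylinder_anti hm p
    _ = cylinder y k := cylinder_eq_of_mem hpc

include hAmeas hAint hAPhi in
lemma dipExists (p : ℕ → Bool) (l : ℕ) (a : ℝ) (ha : 0 < a) (ha1 : a ≤ 1)
    (hl : 1 - a/2 < densSeq μ A p l) :
    ∃ y, y ∈ cylinder p l ∧ ∃ k', l < k' ∧ densSeq μ A y k' ≤ 1 - a/2 ∧
      1 - a < densSeq μ A y k' ∧ ∀ j, l ≤ j → j < k' → 1 - a/2 < densSeq μ A y j := by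
  classical
  obtain ⟨y, hyc, m, hlm, hym⟩ := drop hμ hAmeas hAint hAPhi p l
  have hyl : densSeq μ A y l = densSeq μ A p l := densSeq_eq_of_mem hyc
  have hhalf : (1:ℝ)/2 ≤ 1 - a/2 := by linarith
  have hne : l ≠ m := by
    intro h
    rw [← h, hyl] at hym
    linarith
  have hex : ∃ j, l < j ∧ densSeq μ A y j ≤ 1 - a/2 :=
    ⟨m, lt_of_le_of_ne hlm hne, le_trans (le_of_lt hym) hhalf⟩
  set k' := Nat.find hex with hk'
  obtain ⟨hlk, hdk⟩ := Nat.find_spec hex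
  have hmin : ∀ j, l ≤ j → j < k' → 1 - a/2 < densSeq μ A y j := by
    intro j hlj hjk
    rcases eq_or_lt_of_le hlj with h | h
    · rw [← h, hyl]; exact hl
    · have := Nat.find_min hex hjk
      push_neg at this
      exact this h
  have hk1 : l ≤ k' - 1 := by omega
  have hk2 : k' - 1 < k' := by omega
  have hdb : 2 * densSeq μ A y (k' - 1) - 1 ≤ densSeq μ A y ((k' - 1) + 1) :=
    densSeq_doubling hμ y (k' - 1)
  have hk3 : (k' - 1) + 1 = k' := by omega
  rw [hk3] at hdb
  have hlow : 1 - a < densSeq μ A y k' := by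
    have := hmin (k' - 1) hk1 hk2
    linarith
  exact ⟨y, hyc, k', hlk, hdk, hlow, hmin⟩

end Existence


section Part1

variable {μ : Measure (ℕ → Bool)} {A : Set (ℕ → Bool)}

lemma isOpen_densSeq_lt (n : ℕ) (r : ℝ) : IsOpen {x | densSeq μ A x n < r} := by
  rw [isOpen_iff_forall_mem_open]
  intro x hx
  exact ⟨cylinder x n, fun z hz => by
    simp only [mem_setOf_eq]
    rw [densSeq_eq_of_mem hz]
    exact hx, isOpen_cylinder x n, mem_cylinder_self x n⟩

lemma isOpen_densSeq_gt (n : ℕ) (r : ℝ) : IsOpen {x | r < densSeq μ A x n} := by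
  rw [isOpen_iff_forall_mem_open]
  intro x hx
  exact ⟨cylinder x n, fun z hz => by
    simp only [mem_setOf_eq]
    rw [densSeq_eq_of_mem hz]
    exact hx, isOpen_cylinder x n, mem_cylinder_self x n⟩

lemma isGδ_freq_lt (r : ℝ) : IsGδ {x | ∃ᶠ n in atTop, densSeq μ A x n < r} := by
  have heq : {x | ∃ᶠ n in atTop, densSeq μ A x n < r} =
      ⋂ N : ℕ, ⋃ n : ℕ, ⋃ _ : N ≤ n, {x | densSeq μ A x n < r} := by
    ext x
    simp only [mem_setOf_eq, frequently_atTop, mem_iInter, mem_iUnion]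
    constructor
    · intro h N; obtain ⟨n, hn, hl⟩ := h N; exact ⟨n, hn, hl⟩
    · intro h N; obtain ⟨n, hn, hl⟩ := h N; exact ⟨n, hn, hl⟩
  rw [heq]
  refine IsGδ.iInter (fun N => IsOpen.isGδ ?_)
  exact isOpen_iUnion (fun n => isOpen_iUnion (fun _ => isOpen_densSeq_lt n r))

lemma isGδ_freq_gt (r : ℝ) : IsGδ {x | ∃ᶠ n in atTop, r < densSeq μ A x n} := by
  have heq : {x | ∃ᶠ n in atTop, r < densSeq μ A x n} =
      ⋂ N : ℕ, ⋃ n : ℕ, ⋃ _ : N ≤ n, {x | r < densSeq μ A x n} := by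
    ext x
    simp only [mem_setOf_eq, frequently_atTop, mem_iInter, mem_iUnion]
    constructor
    · intro h N; obtain ⟨n, hn, hl⟩ := h N; exact ⟨n, hn, hl⟩
    · intro h N; obtain ⟨n, hn, hl⟩ := h N; exact ⟨n, hn, hl⟩
  rw [heq]
  refine IsGδ.iInter (fun N => IsOpen.isGδ ?_)
  exact isOpen_iUnion (fun n => isOpen_iUnion (fun _ => isOpen_densSeq_gt n r))

noncomputable def ratPair (n : ℕ) : ℚ × ℚ := (exists_surjective_nat (ℚ × ℚ)).choose n

lemma ratPair_surj (p q : ℚ) : ∃ n, ratPair n = (p, q) :=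
  (exists_surjective_nat (ℚ × ℚ)).choose_spec (p, q)

lemma blur_isSigma03 (hμ : ∀ (x : ℕ → Bool) (n : ℕ), μ (cylinder x n) = 1 / 2 ^ n) :
    IsSigma03 (BlurSet μ A) := by
  classical
  set G : ℕ → Set (ℕ → Bool) := fun n =>
    {x : ℕ → Bool | ((ratPair n).1 : ℝ) < ((ratPair n).2 : ℝ)} ∩
    ({x | ∃ᶠ k in atTop, densSeq μ A x k < ((ratPair n).1 : ℝ)} ∩
     {x | ∃ᶠ k in atTop, ((ratPair n).2 : ℝ) < densSeq μ A x k}) with hG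
  have hGmem : ∀ n x, x ∈ G n ↔
      (((ratPair n).1 : ℝ) < ((ratPair n).2 : ℝ) ∧
       (∃ᶠ k in atTop, densSeq μ A x k < ((ratPair n).1 : ℝ)) ∧
       (∃ᶠ k in atTop, ((ratPair n).2 : ℝ) < densSeq μ A x k)) := by
    intro n x
    rw [hG]
    simp only [mem_inter_iff, mem_setOf_eq]
  refine ⟨G, fun n => ?_, ?_⟩
  · by_cases hc : ((ratPair n).1 : ℝ) < ((ratPair n).2 : ℝ)
    · have h1 : {x : ℕ → Bool | ((ratPair n).1 : ℝ) <
          ((ratPair n).2 : ℝ)} = univ := by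
        ext z
        simp only [mem_setOf_eq, mem_univ, iff_true]
        exact hc
      rw [hG]
      simp only
      rw [h1, univ_inter]
      exact (isGδ_freq_lt _).inter (isGδ_freq_gt _)
    · have h1 : G n = ∅ := by
        ext z
        simp only [hGmem, mem_empty_iff_false, iff_false]
        tauto
      rw [h1]
      exact IsGδ.empty
  · ext x
    have hb1 : IsBoundedUnder (· ≤ ·) atTop (densSeq μ A x) :=
      ⟨1, Filter.eventually_map.mpr (Filter.Eventually.of_forall (densSeq_le_one hμ x))⟩
    have hb0 : IsBoundedUnder (· ≥ ·) atTop (densSeq μ A x) :=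
      ⟨0, Filter.eventually_map.mpr (Filter.Eventually.of_forall (densSeq_nonneg x))⟩
    constructor
    · intro hx
      have hx' : liminf (densSeq μ A x) atTop < limsup (densSeq μ A x) atTop := hx
      obtain ⟨p, hp1, hp2⟩ := exists_rat_btwn hx'
      obtain ⟨q, hq1, hq2⟩ := exists_rat_btwn hp2
      have hf1 : ∃ᶠ k in atTop, densSeq μ A x k < (p : ℝ) :=
        frequently_lt_of_liminf_lt hb1.isCoboundedUnder_ge hp1
      have hf2 : ∃ᶠ k in atTop, (q : ℝ) < densSeq μ A x k :=
        frequently_lt_of_lt_limsup hb0.isCoboundedUnder_le hq2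
      obtain ⟨n, hn⟩ := ratPair_surj p q
      refine mem_iUnion.mpr ⟨n, (hGmem n x).mpr ?_⟩
      rw [hn]
      exact ⟨hq1, hf1, hf2⟩
    · intro hx
      obtain ⟨n, hn⟩ := mem_iUnion.mp hx
      obtain ⟨hpq, h1, h2⟩ := (hGmem n x).mp hn
      have hl1 : liminf (densSeq μ A x) atTop ≤ ((ratPair n).1 : ℝ) :=
        liminf_le_of_frequently_le (h1.mono fun k hk => le_of_lt hk) hb0
      have hl2 : ((ratPair n).2 : ℝ) ≤ limsup (densSeq μ A x) atTop :=
        le_limsup_of_frequently_le (h2.mono fun k hk => le_of_lt hk) hb1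
      show liminf (densSeq μ A x) atTop < limsup (densSeq μ A x) atTop
      exact lt_of_le_of_lt hl1 (lt_of_lt_of_le hpq hl2)

end Part1


section Construction

open scoped Classical

variable (μ : Measure (ℕ → Bool)) (A : Set (ℕ → Bool))

noncomputable def basePt : ℕ → Bool :=
  if h : ∃ p, p ∈ A ∧ Tendsto (densSeq μ A p) atTop (𝓝 1) then h.choose else fun _ => false

noncomputable def highIdx (p : ℕ → Bool) (l : ℕ) (a : ℝ) : ℕ :=
  if h : ∃ l₁, l ≤ l₁ ∧ 1 - a/4 < densSeq μ A p l₁ then h.choose else l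

noncomputable def dipPt (p : ℕ → Bool) (l₁ : ℕ) (a : ℝ) : (ℕ → Bool) × ℕ :=
  if h : ∃ y, y ∈ cylinder p l₁ ∧ ∃ k', l₁ < k' ∧ densSeq μ A y k' ≤ 1 - a/2 ∧
      1 - a < densSeq μ A y k' ∧ ∀ j, l₁ ≤ j → j < k' → 1 - a/2 < densSeq μ A y j
  then (h.choose, h.choose_spec.2.choose) else (p, l₁ + 1)

noncomputable def risePt (y : ℕ → Bool) (k : ℕ) (c : ℝ) : ℕ → Bool :=
  if h : ∃ p, p ∈ A ∧ p ∈ cylinder y k ∧ ∀ m, k ≤ m → c ≤ densSeq μ A p m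
  then h.choose else y

noncomputable def amp (k : ℕ) : ℝ := (2:ℝ)⁻¹ ^ ((Nat.unpair k).1 + 2)

lemma amp_pos (k : ℕ) : 0 < amp k := by unfold amp; positivity

lemma amp_le (k : ℕ) : amp k ≤ 1/4 := by
  unfold amp
  calc (2:ℝ)⁻¹ ^ ((Nat.unpair k).1 + 2) ≤ (2:ℝ)⁻¹ ^ 2 :=
        pow_le_pow_of_le_one (by norm_num) (by norm_num) (by omega)
    _ = 1/4 := by norm_num

noncomputable def step (V : ℕ → ℕ → Set (ℕ → Bool)) (x : ℕ → Bool) (k : ℕ)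
    (s : (ℕ → Bool) × ℕ × (ℕ → ℕ)) : (ℕ → Bool) × ℕ × (ℕ → ℕ) :=
  if cylinder x k ⊆ V (Nat.unpair k).1 (s.2.2 (Nat.unpair k).1) then
    (risePt μ A (dipPt μ A s.1 (highIdx μ A s.1 s.2.1 (amp k)) (amp k)).1
       (dipPt μ A s.1 (highIdx μ A s.1 s.2.1 (amp k)) (amp k)).2 (1 - 2 * amp k),
     (dipPt μ A s.1 (highIdx μ A s.1 s.2.1 (amp k)) (amp k)).2,
     Function.update s.2.2 (Nat.unpair k).1 (s.2.2 (Nat.unpair k).1 + 1))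
  else (s.1, s.2.1 + 1, s.2.2)

noncomputable def stSeq (V : ℕ → ℕ → Set (ℕ → Bool)) (x : ℕ → Bool) :
    ℕ → (ℕ → Bool) × ℕ × (ℕ → ℕ)
  | 0 => (basePt μ A, 0, fun _ => 0)
  | (k+1) => step μ A V x k (stSeq V x k)

noncomputable def gFun (V : ℕ → ℕ → Set (ℕ → Bool)) (x : ℕ → Bool) : ℕ → Bool :=
  fun i => (stSeq μ A V x (i+1)).1 i

def Trig (V : ℕ → ℕ → Set (ℕ → Bool)) (x : ℕ → Bool) (k : ℕ) : Prop :=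
  cylinder x k ⊆ V (Nat.unpair k).1 ((stSeq μ A V x k).2.2 (Nat.unpair k).1)

variable {μ A}

lemma stSeq_succ_pos {V x k} (h : Trig μ A V x k) :
    stSeq μ A V x (k+1) =
      (risePt μ A (dipPt μ A (stSeq μ A V x k).1
          (highIdx μ A (stSeq μ A V x k).1 (stSeq μ A V x k).2.1 (amp k)) (amp k)).1
        (dipPt μ A (stSeq μ A V x k).1
          (highIdx μ A (stSeq μ A V x k).1 (stSeq μ A V x k).2.1 (amp k)) (amp k)).2
        (1 - 2 * amp k),
       (dipPt μ A (stSeq μ A V x k).1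
          (highIdx μ A (stSeq μ A V x k).1 (stSeq μ A V x k).2.1 (amp k)) (amp k)).2,
       Function.update (stSeq μ A V x k).2.2 (Nat.unpair k).1
         ((stSeq μ A V x k).2.2 (Nat.unpair k).1 + 1)) := by
  show step μ A V x k (stSeq μ A V x k) = _
  unfold step
  exact if_pos h

lemma stSeq_succ_neg {V x k} (h : ¬ Trig μ A V x k) :
    stSeq μ A V x (k+1) =
      ((stSeq μ A V x k).1, (stSeq μ A V x k).2.1 + 1, (stSeq μ A V x k).2.2) := by
  show step μ A V x k (stSeq μ A V x k) = _
  unfold step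
  exact if_neg h

-- unconditional structural facts
lemma highIdx_ge (p : ℕ → Bool) (l : ℕ) (a : ℝ) : l ≤ highIdx μ A p l a := by
  unfold highIdx
  split_ifs with h
  · exact h.choose_spec.1
  · exact le_refl l

lemma dipPt_gt (p : ℕ → Bool) (l₁ : ℕ) (a : ℝ) : l₁ < (dipPt μ A p l₁ a).2 := by
  unfold dipPt
  split_ifs with h
  · exact h.choose_spec.2.choose_spec.1
  · exact Nat.lt_succ_self l₁

lemma dipPt_mem (p : ℕ → Bool) (l₁ : ℕ) (a : ℝ) : (dipPt μ A p l₁ a).1 ∈ cylinder p l₁ := by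
  unfold dipPt
  split_ifs with h
  · exact h.choose_spec.1
  · exact mem_cylinder_self p l₁

lemma risePt_mem (y : ℕ → Bool) (k : ℕ) (c : ℝ) : risePt μ A y k c ∈ cylinder y k := by
  unfold risePt
  split_ifs with h
  · exact h.choose_spec.2.1
  · exact mem_cylinder_self y k

lemma L_lt_succ (V x k) : (stSeq μ A V x k).2.1 < (stSeq μ A V x (k+1)).2.1 := by
  by_cases h : Trig μ A V x k
  · rw [stSeq_succ_pos h]
    exact lt_of_le_of_lt (highIdx_ge _ _ _) (dipPt_gt _ _ _)
  · rw [stSeq_succ_neg h]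
    exact Nat.lt_succ_self _

lemma L_mono {V x} : StrictMono (fun k => (stSeq μ A V x k).2.1) :=
  strictMono_nat_of_lt_succ (fun k => L_lt_succ V x k)

lemma L_ge (V x k) : k ≤ (stSeq μ A V x k).2.1 := by
  induction k with
  | zero => exact Nat.zero_le _
  | succ k ih => exact Nat.succ_le_of_lt (lt_of_le_of_lt ih (L_lt_succ V x k))

lemma mem_cyl_step (V x k) :
    (stSeq μ A V x (k+1)).1 ∈ cylinder (stSeq μ A V x k).1 (stSeq μ A V x k).2.1 := by
  by_cases h : Trig μ A V x k
  · rw [stSeq_succ_pos h]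
    set p := (stSeq μ A V x k).1
    set l := (stSeq μ A V x k).2.1
    set l₁ := highIdx μ A p l (amp k)
    set yk := dipPt μ A p l₁ (amp k)
    have h1 : risePt μ A yk.1 yk.2 (1 - 2 * amp k) ∈ cylinder yk.1 yk.2 := risePt_mem _ _ _
    have h2 : risePt μ A yk.1 yk.2 (1 - 2 * amp k) ∈ cylinder yk.1 l₁ :=
      cylinder_anti (le_of_lt (dipPt_gt _ _ _)) _ h1
    have h3 : cylinder yk.1 l₁ = cylinder p l₁ := cylinder_eq_of_mem (dipPt_mem _ _ _)
    rw [h3] at h2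
    exact cylinder_anti (highIdx_ge p l (amp k)) _ h2
  · rw [stSeq_succ_neg h]
    exact mem_cylinder_self _ _

lemma mem_cyl_le {V x} : ∀ j k, j ≤ k →
    (stSeq μ A V x k).1 ∈ cylinder (stSeq μ A V x j).1 (stSeq μ A V x j).2.1 := by
  intro j k hjk
  induction k with
  | zero =>
      rw [Nat.le_zero.mp hjk]
      exact mem_cylinder_self _ _
  | succ k ih =>
      rcases Nat.le_succ_iff_eq_or_le.mp hjk with h | h
      · rw [h]; exact mem_cylinder_self _ _
      · have h1 := ih h
        have h2 := mem_cyl_step (μ := μ) (A := A) V x k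
        intro i hi
        have hiL : i < (stSeq μ A V x k).2.1 :=
          lt_of_lt_of_le hi (L_mono.le_iff_le.mpr h)
        rw [h2 i hiL, h1 i hi]

lemma g_eq_st (V x k) : ∀ i, i < (stSeq μ A V x k).2.1 →
    gFun μ A V x i = (stSeq μ A V x k).1 i := by
  intro i hi
  unfold gFun
  rcases le_total (i+1) k with h | h
  · have h1 := mem_cyl_le (μ := μ) (A := A) (V := V) (x := x) (i+1) k h
    have h2 : i < (stSeq μ A V x (i+1)).2.1 := L_ge V x (i+1)
    exact (h1 i h2).symm
  · exact mem_cyl_le (μ := μ) (A := A) (V := V) (x := x) k (i+1) h i hi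

lemma g_mem_cyl (V x k) :
    gFun μ A V x ∈ cylinder (stSeq μ A V x k).1 (stSeq μ A V x k).2.1 :=
  fun i hi => g_eq_st V x k i hi

lemma g_densSeq (V x k) : ∀ j, j ≤ (stSeq μ A V x k).2.1 →
    densSeq μ A (gFun μ A V x) j = densSeq μ A (stSeq μ A V x k).1 j :=
  fun j hj => densSeq_eq_of_mem (cylinder_anti hj _ (g_mem_cyl V x k))

-- counters
lemma C_succ_pos {V x k} (h : Trig μ A V x k) :
    (stSeq μ A V x (k+1)).2.2 = Function.update (stSeq μ A V x k).2.2 (Nat.unpair k).1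
      ((stSeq μ A V x k).2.2 (Nat.unpair k).1 + 1) := by
  rw [stSeq_succ_pos h]

lemma C_succ_neg {V x k} (h : ¬ Trig μ A V x k) :
    (stSeq μ A V x (k+1)).2.2 = (stSeq μ A V x k).2.2 := by
  rw [stSeq_succ_neg h]

lemma C_mono (V x m) : Monotone (fun k => (stSeq μ A V x k).2.2 m) := by
  apply monotone_nat_of_le_succ
  intro k
  by_cases h : Trig μ A V x k
  · rw [C_succ_pos h]
    by_cases hm : m = (Nat.unpair k).1
    · subst hm; rw [Function.update_self]; omega
    · rw [Function.update_of_ne hm]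
  · rw [C_succ_neg h]

lemma stSeq_congr {V : ℕ → ℕ → Set (ℕ → Bool)} {x y : ℕ → Bool} {k : ℕ}
    (h : y ∈ cylinder x k) : ∀ j, j ≤ k → stSeq μ A V x j = stSeq μ A V y j := by
  intro j hj
  induction j with
  | zero => rfl
  | succ j ih =>
      have hj' : j ≤ k := le_of_lt (Nat.lt_of_succ_le hj)
      have hst := ih hj'
      show step μ A V x j (stSeq μ A V x j) = step μ A V y j (stSeq μ A V y j)
      rw [← hst]
      unfold step
      have hcyl : cylinder y j = cylinder x j :=
        cylinder_eq_of_mem (cylinder_anti hj' x h)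
      rw [hcyl]

lemma gFun_continuous (V : ℕ → ℕ → Set (ℕ → Bool)) : Continuous (gFun μ A V) := by
  apply continuous_pi
  intro i
  apply IsLocallyConstant.continuous
  rw [IsLocallyConstant.iff_exists_open]
  intro x
  refine ⟨cylinder x (i+1), isOpen_cylinder x (i+1), mem_cylinder_self x (i+1), ?_⟩
  intro y hy
  unfold gFun
  rw [stSeq_congr (μ := μ) (A := A) (V := V) hy (i+1) (le_refl _)]

end Construction


section Specs

open scoped Classical

variable {μ : Measure (ℕ → Bool)} {A : Set (ℕ → Bool)}
variable (hμ : ∀ (x : ℕ → Bool) (n : ℕ), μ (cylinder x n) = 1 / 2 ^ n)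
variable (hAmeas : MeasurableSet A) (hAne : A.Nonempty)
variable (hAint : interior A = ∅) (hAPhi : A = PhiSet μ A)

omit hμ hAmeas hAint in
include hAne hAPhi in
lemma basePt_spec : basePt μ A ∈ A ∧ Tendsto (densSeq μ A (basePt μ A)) atTop (𝓝 1) := by
  obtain ⟨a, ha⟩ := hAne
  have h : ∃ p, p ∈ A ∧ Tendsto (densSeq μ A p) atTop (𝓝 1) :=
    ⟨a, ha, mem_A_tendsto hAPhi ha⟩
  unfold basePt
  rw [dif_pos h]
  exact h.choose_spec

omit hμ hAmeas hAne hAint hAPhi in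
lemma highIdx_spec {p : ℕ → Bool} (hp : Tendsto (densSeq μ A p) atTop (𝓝 1))
    {a : ℝ} (ha : 0 < a) (l : ℕ) :
    1 - a/4 < densSeq μ A p (highIdx μ A p l a) := by
  have hev : ∀ᶠ n in atTop, 1 - a/4 < densSeq μ A p n :=
    hp.eventually (eventually_gt_nhds (by linarith))
  have h : ∃ l₁, l ≤ l₁ ∧ 1 - a/4 < densSeq μ A p l₁ := by
    obtain ⟨n, hn1, hn2⟩ := (eventually_ge_atTop l).and hev |>.exists
    exact ⟨n, hn1, hn2⟩
  unfold highIdx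
  rw [dif_pos h]
  exact h.choose_spec.2

include hμ hAmeas hAint hAPhi in
lemma dipPt_spec {p : ℕ → Bool} {l₁ : ℕ} {a : ℝ} (ha : 0 < a) (ha1 : a ≤ 1)
    (hl : 1 - a/2 < densSeq μ A p l₁) :
    densSeq μ A (dipPt μ A p l₁ a).1 (dipPt μ A p l₁ a).2 ≤ 1 - a/2 ∧
    1 - a < densSeq μ A (dipPt μ A p l₁ a).1 (dipPt μ A p l₁ a).2 ∧
    ∀ j, l₁ ≤ j → j < (dipPt μ A p l₁ a).2 →
      1 - a/2 < densSeq μ A (dipPt μ A p l₁ a).1 j := by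
  have h : ∃ y, y ∈ cylinder p l₁ ∧ ∃ k', l₁ < k' ∧ densSeq μ A y k' ≤ 1 - a/2 ∧
      1 - a < densSeq μ A y k' ∧ ∀ j, l₁ ≤ j → j < k' → 1 - a/2 < densSeq μ A y j := by
    obtain ⟨y, hy, k', h1, h2, h3, h4⟩ := dipExists hμ hAmeas hAint hAPhi p l₁ a ha ha1 hl
    exact ⟨y, hy, k', h1, h2, h3, h4⟩
  have he : dipPt μ A p l₁ a = (h.choose, h.choose_spec.2.choose) := by
    unfold dipPt
    rw [dif_pos h]
  rw [he]
  obtain ⟨_, h2, h3, h4⟩ := h.choose_spec.2.choose_spec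
  exact ⟨h2, h3, h4⟩

include hμ hAmeas hAint hAPhi in
lemma risePt_spec {y : ℕ → Bool} {k : ℕ} {c : ℝ} (hc0 : 0 ≤ c)
    (hc : c < densSeq μ A y k) :
    risePt μ A y k c ∈ A ∧ ∀ m, k ≤ m → c ≤ densSeq μ A (risePt μ A y k c) m := by
  have h : ∃ p, p ∈ A ∧ p ∈ cylinder y k ∧ ∀ m, k ≤ m → c ≤ densSeq μ A p m := by
    obtain ⟨p, h1, h2, h3⟩ := rise hμ hAmeas hAint hAPhi y k c hc0 hc
    exact ⟨p, h1, h2, h3⟩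
  unfold risePt
  rw [dif_pos h]
  exact ⟨h.choose_spec.1, h.choose_spec.2.2⟩

include hμ hAmeas hAne hAint hAPhi in
lemma stSeq_inv (V x) : ∀ k, (stSeq μ A V x k).1 ∈ A ∧
    Tendsto (densSeq μ A (stSeq μ A V x k).1) atTop (𝓝 1) := by
  intro k
  induction k with
  | zero => exact basePt_spec hAne hAPhi
  | succ k ih =>
      by_cases h : Trig μ A V x k
      · set p := (stSeq μ A V x k).1 with hp
        set l := (stSeq μ A V x k).2.1
        set a := amp k with hadef
        have ha : 0 < a := amp_pos k
        have ha4 : a ≤ 1/4 := amp_le k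
        set l₁ := highIdx μ A p l a with hl₁
        have hhigh : 1 - a/4 < densSeq μ A p l₁ := highIdx_spec ih.2 ha l
        have hl2 : 1 - a/2 < densSeq μ A p l₁ := by linarith
        have hdip := dipPt_spec hμ hAmeas hAint hAPhi ha (by linarith) hl2
        have hrise := risePt_spec hμ hAmeas hAint hAPhi
          (y := (dipPt μ A p l₁ a).1) (k := (dipPt μ A p l₁ a).2) (c := 1 - 2*a)
          (by linarith) (by linarith [hdip.2.1])
        rw [stSeq_succ_pos h]
        exact ⟨hrise.1, mem_A_tendsto hAPhi hrise.1⟩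
      · rw [stSeq_succ_neg h]
        exact ih

include hμ hAmeas hAne hAint hAPhi in
lemma trigStep {V x k} (h : Trig μ A V x k) :
    ∃ l₁, (stSeq μ A V x k).2.1 ≤ l₁ ∧ l₁ < (stSeq μ A V x (k+1)).2.1 ∧
      (stSeq μ A V x (k+1)).1 ∈ cylinder (stSeq μ A V x k).1 l₁ ∧
      1 - amp k / 4 < densSeq μ A (stSeq μ A V x (k+1)).1 l₁ ∧
      densSeq μ A (stSeq μ A V x (k+1)).1 ((stSeq μ A V x (k+1)).2.1) ≤ 1 - amp k / 2 ∧
      (∀ j, l₁ ≤ j → j ≤ (stSeq μ A V x (k+1)).2.1 →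
        1 - amp k < densSeq μ A (stSeq μ A V x (k+1)).1 j) ∧
      (∀ j, (stSeq μ A V x (k+1)).2.1 ≤ j →
        1 - 2 * amp k ≤ densSeq μ A (stSeq μ A V x (k+1)).1 j) := by
  have ih := stSeq_inv hμ hAmeas hAne hAint hAPhi V x k
  set p := (stSeq μ A V x k).1 with hp
  set l := (stSeq μ A V x k).2.1 with hldef
  set a := amp k with hadef
  have ha : 0 < a := amp_pos k
  have ha4 : a ≤ 1/4 := amp_le k
  set l₁ := highIdx μ A p l a with hl₁
  have hl1ge : l ≤ l₁ := highIdx_ge p l a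
  have hhigh : 1 - a/4 < densSeq μ A p l₁ := highIdx_spec ih.2 ha l
  have hl2 : 1 - a/2 < densSeq μ A p l₁ := by linarith
  set y := (dipPt μ A p l₁ a).1 with hy
  set k' := (dipPt μ A p l₁ a).2 with hk'
  have hkgt : l₁ < k' := dipPt_gt p l₁ a
  have hymem : y ∈ cylinder p l₁ := dipPt_mem p l₁ a
  have hdip := dipPt_spec hμ hAmeas hAint hAPhi ha (by linarith) hl2
  set p' := risePt μ A y k' (1 - 2*a) with hp'
  have hrise := risePt_spec hμ hAmeas hAint hAPhi
    (y := y) (k := k') (c := 1 - 2*a) (by linarith) (by linarith [hdip.2.1])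
  have hp'mem : p' ∈ cylinder y k' := risePt_mem y k' (1 - 2*a)
  have hsucc : stSeq μ A V x (k+1) = (p', k',
      Function.update (stSeq μ A V x k).2.2 (Nat.unpair k).1
        ((stSeq μ A V x k).2.2 (Nat.unpair k).1 + 1)) := stSeq_succ_pos h
  -- densities of p' agree with those of y up to k'
  have hagree : ∀ j, j ≤ k' → densSeq μ A p' j = densSeq μ A y j :=
    fun j hj => densSeq_eq_of_mem (cylinder_anti hj y hp'mem)
  have hyl₁ : densSeq μ A y l₁ = densSeq μ A p l₁ := densSeq_eq_of_mem hymem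
  refine ⟨l₁, hl1ge, ?_, ?_, ?_, ?_, ?_, ?_⟩
  · rw [hsucc]
    exact hkgt
  · rw [hsucc]
    show p' ∈ cylinder p l₁
    have h2 : p' ∈ cylinder y l₁ := cylinder_anti (le_of_lt hkgt) y hp'mem
    rwa [cylinder_eq_of_mem hymem] at h2
  · rw [hsucc]
    simp only
    rw [hagree l₁ (le_of_lt hkgt), hyl₁]
    exact hhigh
  · rw [hsucc]
    simp only
    rw [hagree k' (le_refl k')]
    exact hdip.1
  · rw [hsucc]
    simp only
    intro j hj1 hj2
    rw [hagree j hj2]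
    rcases lt_or_eq_of_le hj2 with hlt | heq
    · have := hdip.2.2 j hj1 hlt
      linarith
    · rw [heq]
      exact hdip.2.1
  · rw [hsucc]
    simp only
    intro j hj
    exact hrise.2 j hj

end Specs


section MainLemmas

variable {μ : Measure (ℕ → Bool)} {A : Set (ℕ → Bool)}
variable (hμ : ∀ (x : ℕ → Bool) (n : ℕ), μ (cylinder x n) = 1 / 2 ^ n)
variable (hAmeas : MeasurableSet A) (hAne : A.Nonempty)
variable (hAint : interior A = ∅) (hAPhi : A = PhiSet μ A)
variable {V : ℕ → ℕ → Set (ℕ → Bool)} {x : ℕ → Bool}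

omit hμ hAmeas hAne hAint hAPhi in
lemma trig_infinite_of_mem (hV : ∀ m n, IsOpen (V m n)) {m : ℕ} (hVm : ∀ n, x ∈ V m n) :
    ∀ K, ∃ k, K ≤ k ∧ Trig μ A V x k ∧ (Nat.unpair k).1 = m := by
  intro K
  by_contra hcon
  push_neg at hcon
  -- the counter for m is eventually constant
  have hstab : ∀ k, K ≤ k → (stSeq μ A V x k).2.2 m = (stSeq μ A V x K).2.2 m := by
    intro k hk
    induction k with
    | zero => rw [Nat.le_zero.mp hk]
    | succ k ih =>
        rcases Nat.le_succ_iff_eq_or_le.mp hk with h | h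
        · rw [h]
        · have ihk := ih h
          by_cases ht : Trig μ A V x k
          · have hne : (Nat.unpair k).1 ≠ m := hcon k h ht
            rw [C_succ_pos ht, Function.update_of_ne (Ne.symm hne)]
            exact ihk
          · rw [C_succ_neg ht]
            exact ihk
  set n₀ := (stSeq μ A V x K).2.2 m with hn₀
  obtain ⟨w, hw⟩ := exists_cylinder_subset (hV m n₀) (hVm n₀)
  set j := Nat.pair m (max w K) with hj
  have hjw : w ≤ j := le_trans (le_max_left w K) (Nat.right_le_pair _ _)
  have hjK : K ≤ j := le_trans (le_max_right w K) (Nat.right_le_pair _ _)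
  have hcomp : (Nat.unpair j).1 = m := by rw [hj, Nat.unpair_pair]
  have htrig : Trig μ A V x j := by
    show cylinder x j ⊆ V (Nat.unpair j).1 ((stSeq μ A V x j).2.2 (Nat.unpair j).1)
    rw [hcomp, hstab j hjK]
    exact fun z hz => hw (cylinder_anti hjw x hz)
  exact hcon j hjK htrig hcomp

include hμ hAmeas hAne hAint hAPhi in
lemma mem_blur_g (hV : ∀ m n, IsOpen (V m n)) (hx : ∃ m, ∀ n, x ∈ V m n) :
    gFun μ A V x ∈ BlurSet μ A := by
  obtain ⟨m, hVm⟩ := hx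
  have htr := trig_infinite_of_mem (μ := μ) (A := A) hV hVm
  set a : ℝ := (2:ℝ)⁻¹ ^ (m + 2) with hadef
  have ha : 0 < a := by positivity
  have hfreq_low : ∀ K, ∃ j, K ≤ j ∧ densSeq μ A (gFun μ A V x) j ≤ 1 - a/2 := by
    intro K
    obtain ⟨k, hkK, hkT, hkm⟩ := htr K
    obtain ⟨l₁, _, hl₁lt, _, _, hbot, _, _⟩ := trigStep hμ hAmeas hAne hAint hAPhi hkT
    have hampk : amp k = a := by rw [hadef, amp, hkm]
    refine ⟨(stSeq μ A V x (k+1)).2.1, ?_, ?_⟩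
    · calc K ≤ k := hkK
        _ ≤ k+1 := Nat.le_succ k
        _ ≤ (stSeq μ A V x (k+1)).2.1 := L_ge V x (k+1)
    · rw [g_densSeq V x (k+1) _ (le_refl _)]
      rw [hampk] at hbot
      exact hbot
  have hfreq_high : ∀ K, ∃ j, K ≤ j ∧ 1 - a/4 < densSeq μ A (gFun μ A V x) j := by
    intro K
    obtain ⟨k, hkK, hkT, hkm⟩ := htr K
    obtain ⟨l₁, hl₁ge, hl₁lt, _, htop, _, _, _⟩ := trigStep hμ hAmeas hAne hAint hAPhi hkT
    have hampk : amp k = a := by rw [hadef, amp, hkm]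
    refine ⟨l₁, ?_, ?_⟩
    · calc K ≤ k := hkK
        _ ≤ (stSeq μ A V x k).2.1 := L_ge V x k
        _ ≤ l₁ := hl₁ge
    · rw [g_densSeq V x (k+1) _ (le_of_lt hl₁lt)]
      rw [hampk] at htop
      exact htop
  have hb1 : IsBoundedUnder (· ≤ ·) atTop (densSeq μ A (gFun μ A V x)) :=
    ⟨1, Filter.eventually_map.mpr (Filter.Eventually.of_forall (densSeq_le_one hμ _))⟩
  have hb0 : IsBoundedUnder (· ≥ ·) atTop (densSeq μ A (gFun μ A V x)) :=
    ⟨0, Filter.eventually_map.mpr (Filter.Eventually.of_forall (densSeq_nonneg _))⟩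
  have h1 : liminf (densSeq μ A (gFun μ A V x)) atTop ≤ 1 - a/2 :=
    liminf_le_of_frequently_le (frequently_atTop.mpr hfreq_low) hb0
  have h2 : 1 - a/4 ≤ limsup (densSeq μ A (gFun μ A V x)) atTop :=
    le_limsup_of_frequently_le
      (frequently_atTop.mpr (fun K => by
        obtain ⟨j, hj1, hj2⟩ := hfreq_high K
        exact ⟨j, hj1, le_of_lt hj2⟩)) hb1
  show liminf (densSeq μ A (gFun μ A V x)) atTop < limsup (densSeq μ A (gFun μ A V x)) atTop
  calc liminf (densSeq μ A (gFun μ A V x)) atTop ≤ 1 - a/2 := h1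
    _ < 1 - a/4 := by linarith
    _ ≤ limsup (densSeq μ A (gFun μ A V x)) atTop := h2

include hμ hAmeas hAne hAint hAPhi in
lemma tendsto_g_of_not_mem (hx : ∀ m, ∃ n, x ∉ V m n) :
    Tendsto (densSeq μ A (gFun μ A V x)) atTop (𝓝 1) := by
  choose nw hnw using hx
  -- counters are bounded
  have hCbd : ∀ m k, (stSeq μ A V x k).2.2 m ≤ nw m := by
    intro m k
    induction k with
    | zero => exact Nat.zero_le _
    | succ k ih =>
        by_cases ht : Trig μ A V x k
        · by_cases hm : (Nat.unpair k).1 = m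
          · have hlt : (stSeq μ A V x k).2.2 m < nw m := by
              rcases lt_or_eq_of_le ih with h | h
              · exact h
              · exfalso
                apply hnw m
                rw [← h, ← hm]
                exact ht (mem_cylinder_self x k)
            rw [C_succ_pos ht, hm, Function.update_self]
            omega
          · rw [C_succ_pos ht, Function.update_of_ne (fun hc => hm hc.symm)]
            exact ih
        · rw [C_succ_neg ht]
          exact ih
  -- each m triggers only finitely often
  have claim2 : ∀ m, ∃ K, ∀ k, K ≤ k → ¬(Trig μ A V x k ∧ (Nat.unpair k).1 = m) := by
    intro m
    by_contra hcon
    push_neg at hcon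
    have grow : ∀ N, ∃ k, N ≤ (stSeq μ A V x k).2.2 m := by
      intro N
      induction N with
      | zero => exact ⟨0, Nat.zero_le _⟩
      | succ N ih =>
          obtain ⟨k, hk⟩ := ih
          obtain ⟨k', hk'ge, hk'T, hk'm⟩ := hcon k
          refine ⟨k' + 1, ?_⟩
          have h1 : (stSeq μ A V x k).2.2 m ≤ (stSeq μ A V x k').2.2 m :=
            C_mono V x m hk'ge
          rw [C_succ_pos hk'T, hk'm, Function.update_self]
          omega
    obtain ⟨k, hk⟩ := grow (nw m + 1)
    have := hCbd m k
    omega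
  by_cases hfin : ∃ K, ∀ k, K ≤ k → ¬ Trig μ A V x k
  · -- finitely many triggers: g equals the final point
    obtain ⟨K, hK⟩ := hfin
    have hstable : ∀ k, K ≤ k → (stSeq μ A V x k).1 = (stSeq μ A V x K).1 := by
      intro k hk
      induction k with
      | zero => rw [Nat.le_zero.mp hk]
      | succ k ih =>
          rcases Nat.le_succ_iff_eq_or_le.mp hk with h | h
          · rw [h]
          · rw [stSeq_succ_neg (hK k h)]
            exact ih h
    have hg : gFun μ A V x = (stSeq μ A V x K).1 := by
      funext i
      have hik : i < (stSeq μ A V x (K + i + 1)).2.1 := by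
        have := L_ge (μ := μ) (A := A) V x (K + i + 1)
        omega
      rw [g_eq_st V x (K + i + 1) i hik, hstable (K + i + 1) (by omega)]
    rw [hg]
    exact (stSeq_inv hμ hAmeas hAne hAint hAPhi V x K).2
  · push_neg at hfin
    have hinf : ∀ K, ∃ k, K ≤ k ∧ Trig μ A V x k := by
      intro K
      obtain ⟨k, hk1, hk2⟩ := hfin K
      exact ⟨k, hk1, hk2⟩
    -- amplitudes of triggers tend to 0
    have hcomp : ∀ M, ∃ K, ∀ k, K ≤ k → Trig μ A V x k → M < (Nat.unpair k).1 := by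
      intro M
      choose Kf hKf using claim2
      refine ⟨(Finset.range (M+1)).sup Kf, fun k hk ht => ?_⟩
      by_contra hle
      push_neg at hle
      have hmem : (Nat.unpair k).1 ∈ Finset.range (M+1) := Finset.mem_range.mpr (by omega)
      have hKfle : Kf (Nat.unpair k).1 ≤ k := le_trans (Finset.le_sup hmem) hk
      exact hKf (Nat.unpair k).1 k hKfle ⟨ht, rfl⟩
    rw [Metric.tendsto_atTop]
    intro ε hε
    obtain ⟨M, hM⟩ : ∃ M : ℕ, (2:ℝ)⁻¹ ^ (M + 2) < ε / 2 := by
      obtain ⟨n, hn⟩ := exists_pow_lt_of_lt_one (show (0:ℝ) < ε/2 by linarith)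
        (show (2:ℝ)⁻¹ < 1 by norm_num)
      refine ⟨n, lt_of_le_of_lt ?_ hn⟩
      exact pow_le_pow_of_le_one (by norm_num) (by norm_num) (by omega)
    set β : ℝ := (2:ℝ)⁻¹ ^ (M + 2) with hβdef
    have hβpos : 0 < β := by positivity
    have hampβ : ∀ k, M < (Nat.unpair k).1 → 2 * amp k ≤ β := by
      intro k hk
      rw [amp, hβdef]
      have : (2:ℝ) * (2:ℝ)⁻¹ ^ ((Nat.unpair k).1 + 2) = (2:ℝ)⁻¹ ^ ((Nat.unpair k).1 + 1) := by
        rw [pow_succ]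
        field_simp
      rw [this]
      exact pow_le_pow_of_le_one (by norm_num) (by norm_num) (by omega)
    obtain ⟨K₀, hK₀⟩ := hcomp M
    obtain ⟨k₁, hk₁K, hk₁T⟩ := hinf K₀
    set k₀ := k₁ + 1 with hk₀def
    set L₀ := (stSeq μ A V x k₀).2.1 with hL₀def
    have hbase : ∀ j, L₀ ≤ j → 1 - β ≤ densSeq μ A (stSeq μ A V x k₀).1 j := by
      obtain ⟨l₁, _, _, _, _, _, _, hfloor⟩ := trigStep hμ hAmeas hAne hAint hAPhi hk₁T
      intro j hj
      have h2a : 2 * amp k₁ ≤ β := hampβ k₁ (hK₀ k₁ hk₁K hk₁T)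
      have := hfloor j hj
      linarith
    have hInd : ∀ k, k₀ ≤ k → ∀ j, L₀ ≤ j →
        1 - β ≤ densSeq μ A (stSeq μ A V x k).1 j := by
      intro k hk
      induction k with
      | zero => exact absurd hk (by omega)
      | succ k ih =>
          rcases Nat.le_succ_iff_eq_or_le.mp hk with h | h
          · intro j hj
            have hb := hbase j hj
            rw [h] at hb
            exact hb
          · have ihk := ih h
            by_cases ht : Trig μ A V x k
            · obtain ⟨l₁, hl₁ge, hl₁lt, hmem, _, _, hdippath, hfloor⟩ :=
                trigStep hμ hAmeas hAne hAint hAPhi ht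
              have hM' : M < (Nat.unpair k).1 := hK₀ k (by omega) ht
              have h2a : 2 * amp k ≤ β := hampβ k hM'
              have ha : 0 < amp k := amp_pos k
              intro j hj
              rcases le_or_gt j l₁ with hcase | hcase
              · have heq : densSeq μ A (stSeq μ A V x (k+1)).1 j =
                    densSeq μ A (stSeq μ A V x k).1 j :=
                  densSeq_eq_of_mem (cylinder_anti hcase _ hmem)
                rw [heq]
                exact ihk j hj
              · rcases le_or_gt j ((stSeq μ A V x (k+1)).2.1) with hcase2 | hcase2
                · have := hdippath j (le_of_lt hcase) hcase2
                  linarith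
                · have := hfloor j (le_of_lt hcase2)
                  linarith
            · rw [stSeq_succ_neg ht]
              intro j hj
              exact ihk j hj
    refine ⟨L₀, fun j hj => ?_⟩
    have hk : k₀ ≤ k₀ + j := by omega
    have hjL : j ≤ (stSeq μ A V x (k₀ + j)).2.1 := by
      have := L_ge (μ := μ) (A := A) V x (k₀ + j)
      omega
    have heq : densSeq μ A (gFun μ A V x) j = densSeq μ A (stSeq μ A V x (k₀ + j)).1 j :=
      g_densSeq V x (k₀ + j) j hjL
    have hge : 1 - β ≤ densSeq μ A (gFun μ A V x) j := by
      rw [heq]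
      exact hInd (k₀ + j) hk j hj
    have hle1 : densSeq μ A (gFun μ A V x) j ≤ 1 := densSeq_le_one hμ _ j
    rw [Real.dist_eq]
    rw [abs_sub_comm, abs_of_nonneg (by linarith)]
    linarith

include hμ hAmeas hAne hAint hAPhi in
lemma not_mem_blur_g (hx : ∀ m, ∃ n, x ∉ V m n) :
    gFun μ A V x ∉ BlurSet μ A := by
  have ht := tendsto_g_of_not_mem hμ hAmeas hAne hAint hAPhi hx
  intro hblur
  have hblur' : liminf (densSeq μ A (gFun μ A V x)) atTop <
      limsup (densSeq μ A (gFun μ A V x)) atTop := hblur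
  rw [ht.liminf_eq, ht.limsup_eq] at hblur'
  exact lt_irrefl 1 hblur'

end MainLemmas

end BlurAux

/-- **`Σ⁰₃`-completeness of the set of blurry points.** Let `μ` be the coin-tossing measure
on the Cantor space. If `A` is measurable, nonempty, has empty interior, and `A = Φ(A)`,
then `Blur(A)` is `Σ⁰₃`, and every `Σ⁰₃` subset of `2^ℕ` is the preimage of `Blur(A)`
under some continuous map `2^ℕ → 2^ℕ`. -/
theorem stmt_12 (μ : Measure (ℕ → Bool))
    (hμ : ∀ (x : ℕ → Bool) (n : ℕ), μ (cylinder x n) = 1 / 2 ^ n)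
    (A : Set (ℕ → Bool)) (hAmeas : MeasurableSet A) (hAne : A.Nonempty)
    (hAint : interior A = ∅) (hAPhi : A = PhiSet μ A) :
    IsSigma03 (BlurSet μ A) ∧
    ∀ S : Set (ℕ → Bool), IsSigma03 S →
      ∃ g : (ℕ → Bool) → (ℕ → Bool), Continuous g ∧ S = g ⁻¹' (BlurSet μ A) := by
  constructor
  · exact BlurAux.blur_isSigma03 hμ
  · intro S hS
    obtain ⟨G, hGδ, hSG⟩ := hS
    choose U hU using fun m => (hGδ m).eq_iInter_nat
    set V : ℕ → ℕ → Set (ℕ → Bool) := fun m n => ⋂ i ∈ Finset.range (n+1), U m i with hV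
    have hVopen : ∀ m n, IsOpen (V m n) :=
      fun m n => isOpen_biInter_finset (fun i _ => (hU m).1 i)
    have hmem : ∀ x : ℕ → Bool, x ∈ S ↔ ∃ m, ∀ n, x ∈ V m n := by
      intro x
      rw [hSG, mem_iUnion]
      constructor
      · rintro ⟨m, hm⟩
        refine ⟨m, fun n => ?_⟩
        have hm' : x ∈ ⋂ i, U m i := (hU m).2 ▸ hm
        exact mem_biInter (fun i _ => mem_iInter.mp hm' i)
      · rintro ⟨m, hm⟩
        refine ⟨m, ?_⟩
        rw [(hU m).2]
        refine mem_iInter.mpr (fun i => ?_)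
        have hmi := hm i
        exact mem_iInter₂.mp hmi i (Finset.mem_range.mpr (Nat.lt_succ_self i))
    refine ⟨BlurAux.gFun μ A V, BlurAux.gFun_continuous V, ?_⟩
    ext x
    rw [mem_preimage]
    constructor
    · intro hx
      exact BlurAux.mem_blur_g hμ hAmeas hAne hAint hAPhi hVopen ((hmem x).mp hx)
    · intro hx
      by_contra hxS
      have hx' : ∀ m, ∃ n, x ∉ V m n := by
        intro m
        by_contra hc
        push_neg at hc
        exact hxS ((hmem x).mpr ⟨m, hc⟩)
      exact BlurAux.not_mem_blur_g hμ hAmeas hAne hAint hAPhi hx' hx
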